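/- Let X be a Hilbert space, T ∈ B(X) with a {1,3,7}-inverse S, and δT ∈ B(X) with I + S·δT invertible. Suppose B = (I + S·δT)⁻¹S is a {1,3,7}-inverse of T̄ = T + δT. Then N(TS) ⊆ N(T̄B), where N denotes kernel. -/

import Mathlib

theorem stmt_18 {X : Type*} [NormedAddCommGroup X] [InnerProductSpace ℂ X]
    [CompleteSpace X] (T S δT : X →L[ℂ] X)
    (h1 : T * S * T = T)
    (h3 : ContinuousLinearMap.adjoint (T * S) = T * S)
    (h7 : T * S * S = S)
    (hinv : IsUnit (1 + S * δT))
    (hB1 : (T + δT) * (Ring.inverse (1 + S * δT) * S) * (T + δT) = T + δT)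
    (hB3 : ContinuousLinearMap.adjoint ((T + δT) * (Ring.inverse (1 + S * δT) * S)) =
      (T + δT) * (Ring.inverse (1 + S * δT) * S))
    (hB7 : (T + δT) * (Ring.inverse (1 + S * δT) * S) * (Ring.inverse (1 + S * δT) * S) =
      Ring.inverse (1 + S * δT) * S) :
    LinearMap.ker ((T * S : X →L[ℂ] X) : X →ₗ[ℂ] X) ≤
      LinearMap.ker (((T + δT) * (Ring.inverse (1 + S * δT) * S) : X →L[ℂ] X) : X →ₗ[ℂ] X) := by
  set B : X →L[ℂ] X := Ring.inverse (1 + S * δT) * S with hBdef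
  set P : X →L[ℂ] X := T * S with hPdef
  set Q : X →L[ℂ] X := (T + δT) * B with hQdef
  have hm1 : (1 + S * δT) * Ring.inverse (1 + S * δT) = 1 := Ring.mul_inverse_cancel _ hinv
  have hm2 : Ring.inverse (1 + S * δT) * (1 + S * δT) = 1 := Ring.inverse_mul_cancel _ hinv
  have hSB : S * δT * B = S - B := by
    have h : (1 + S * δT) * B = S := by rw [hBdef, ← mul_assoc, hm1, one_mul]
    have h2 : B + S * δT * B = (1 + S * δT) * B := by noncomm_ring
    exact eq_sub_of_add_eq' (h2.trans h)
  have hBS : B * (1 + δT * S) = S := by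
    rw [hBdef]
    calc Ring.inverse (1 + S * δT) * S * (1 + δT * S)
        = Ring.inverse (1 + S * δT) * (1 + S * δT) * S := by noncomm_ring
      _ = S := by rw [hm2, one_mul]
  have hPP : P * P = P := by
    calc P * P = T * S * T * S := by rw [hPdef]; noncomm_ring
      _ = P := by rw [h1, hPdef]
  have hQQ : Q * Q = Q := by
    calc Q * Q = (T + δT) * B * (T + δT) * B := by rw [hQdef]; noncomm_ring
      _ = Q := by rw [hB1, hQdef]
  have hPT : P * T = T := h1
  have hPstar : star P = P := by rw [ContinuousLinearMap.star_eq_adjoint]; exact h3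
  have hQstar : star Q = Q := by rw [ContinuousLinearMap.star_eq_adjoint]; exact hB3
  have hdB : δT * B = Q - T * B := by rw [hQdef]; noncomm_ring
  have hPdB : P * (δT * B) = P - T * B := by
    calc P * (δT * B) = T * (S * δT * B) := by rw [hPdef]; noncomm_ring
      _ = T * (S - B) := by rw [hSB]
      _ = P - T * B := by rw [hPdef]; noncomm_ring
  have hPQ : P * Q = P := by
    calc P * Q = P * T * B + P * (δT * B) := by rw [hQdef]; noncomm_ring
      _ = T * B + (P - T * B) := by rw [hPT, hPdB]
      _ = P := by noncomm_ring
  have hQP : Q * P = P := by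
    calc Q * P = star (star P * star Q) := by simp [star_mul]
      _ = star (P * Q) := by rw [hPstar, hQstar]
      _ = P := by rw [hPQ, hPstar]
  have h5 : (1 - P) * (δT * B) = Q - P := by
    rw [sub_mul, one_mul, hPdB, hdB]; abel
  have hRP : (Q - P) * P = 0 := by rw [sub_mul, hQP, hPP, sub_self]
  have hRR : (Q - P) * (Q - P) = Q - P := by
    rw [sub_mul, mul_sub, mul_sub, hQQ, hQP, hPQ, hPP]; abel
  have hR : (Q - P) * (δT * B) = Q - P := by
    calc (Q - P) * (δT * B) = ((Q - P) - (Q - P) * P) * (δT * B) := by rw [hRP, sub_zero]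
      _ = (Q - P) * ((1 - P) * (δT * B)) := by noncomm_ring
      _ = (Q - P) * (Q - P) := by rw [h5]
      _ = Q - P := hRR
  have h6 : (Q - P) * δT * (B * (1 + δT * S)) = (Q - P) * (δT * S) := by
    rw [hBS]; noncomm_ring
  have h7' : (Q - P) * δT * (B * (1 + δT * S)) = (Q - P) + (Q - P) * (δT * S) := by
    calc (Q - P) * δT * (B * (1 + δT * S))
        = (Q - P) * (δT * B) * (1 + δT * S) := by noncomm_ring
      _ = (Q - P) * (1 + δT * S) := by rw [hR]
      _ = (Q - P) + (Q - P) * (δT * S) := by noncomm_ring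
  have hzero : Q - P = 0 := by
    have hc : (Q - P) * (δT * S) = (Q - P) + (Q - P) * (δT * S) := h6.symm.trans h7'
    have := right_eq_add.mp hc
    exact this
  have hQeqP : Q = P := by rwa [sub_eq_zero] at hzero
  exact le_of_eq (by rw [hQeqP])
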